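/- Let (Γ₁, Γ₂) be a pair of 2×2 complex matrices representing a true 2×2×2 entangled state. Then (Γ₁, Γ₂) is SLOCC-equivalent either to the GHZ pair (I₂, [[1,0],[0,0]]) or to the W pair (I₂, [[0,1],[0,0]]), where I₂ is the 2×2 identity matrix. -/

import Mathlib

open Matrix

section Helpers

private lemma rank_le_one_outer {m n : Type*} [Fintype m] [Fintype n]
    (A : Matrix m n ℂ) (u : m → ℂ) (w : n → ℂ)
    (h : ∀ i j, A i j = u i * w j) : A.rank ≤ 1 := by
  have hr : LinearMap.range A.mulVecLin ≤ Submodule.span ℂ {u} := by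
    rintro _ ⟨x, rfl⟩
    have : A.mulVecLin x = (∑ j, w j * x j) • u := by
      funext i
      simp only [mulVecLin_apply, mulVec, dotProduct, h, Pi.smul_apply, smul_eq_mul,
        Finset.sum_mul, Finset.mul_sum]
      apply Finset.sum_congr rfl
      intro j _
      ring
    rw [this]
    exact Submodule.smul_mem _ _ (Submodule.mem_span_singleton_self u)
  refine le_trans (Submodule.finrank_mono hr) (le_trans (finrank_span_le_card _) ?_)
  simp

private lemma colinear (u v : Fin 2 → ℂ) (hu : u ≠ 0) (h : u 0 * v 1 = u 1 * v 0) :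
    ∃ l : ℂ, v = l • u := by
  by_cases h0 : u 0 = 0
  · by_cases h1 : u 1 = 0
    · exact absurd (funext fun i => by fin_cases i <;> assumption) hu
    · refine ⟨v 1 / u 1, funext fun i => ?_⟩
      fin_cases i
      · have : v 0 = 0 := by
          rw [h0, zero_mul] at h
          rcases mul_eq_zero.mp h.symm with h' | h'
          · exact absurd h' h1
          · exact h'
        simp [this, h0]
      · show v 1 = (v 1 / u 1) * u 1
        field_simp
  · refine ⟨v 0 / u 0, funext fun i => ?_⟩
    fin_cases i
    · show v 0 = (v 0 / u 0) * u 0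
      field_simp
    · show v 1 = (v 0 / u 0) * u 1
      field_simp
      linear_combination h

private lemma rank_one_decomp (A : Matrix (Fin 2) (Fin 2) ℂ) (h : A.det = 0) :
    ∃ u v : Fin 2 → ℂ, ∀ i j, A i j = u i * v j := by
  rw [det_fin_two] at h
  by_cases h00 : A 0 0 ≠ 0
  · refine ⟨![A 0 0, A 1 0], ![1, A 0 1 / A 0 0], fun i j => ?_⟩
    fin_cases i <;> fin_cases j <;> simp <;> field_simp <;> linear_combination h
  · push_neg at h00
    by_cases h01 : A 0 1 ≠ 0
    · have h10 : A 1 0 = 0 := by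
        rw [h00, zero_mul, zero_sub, neg_eq_zero, mul_eq_zero] at h
        rcases h with h | h
        · exact absurd h h01
        · exact h
      refine ⟨![A 0 1, A 1 1], ![0, 1], fun i j => ?_⟩
      fin_cases i <;> fin_cases j <;> simp [h00, h10]
    · push_neg at h01
      refine ⟨![0, 1], ![A 1 0, A 1 1], fun i j => ?_⟩
      fin_cases i <;> fin_cases j <;> simp [h00, h01]

private lemma sq' (a b c d : ℂ) (h : a * d - b * c = 0) :
    !![a,b;c,d] * !![a,b;c,d] = (a + d) • !![a,b;c,d] := by
  ext i j
  fin_cases i <;> fin_cases j <;>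
    simp [Matrix.mul_apply, Fin.sum_univ_two] <;>
    first | ring1 | linear_combination h | linear_combination -h

private lemma sq_eq_trace_smul (A : Matrix (Fin 2) (Fin 2) ℂ) (h : A.det = 0) :
    A * A = (A 0 0 + A 1 1) • A := by
  rw [det_fin_two] at h
  have := sq' (A 0 0) (A 0 1) (A 1 0) (A 1 1) h
  rwa [← Matrix.eta_fin_two A] at this

private lemma exists_mulVec_ne (A : Matrix (Fin 2) (Fin 2) ℂ) (h : A ≠ 0) :
    ∃ v, A.mulVec v ≠ 0 := by
  by_contra hv
  push_neg at hv
  refine h (Matrix.ext fun i j => ?_)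
  have := congrFun (hv (Pi.single j 1)) i
  simpa [Matrix.mulVec_single] using this

private lemma eq_one_of_mulVec (A : Matrix (Fin 2) (Fin 2) ℂ) (h : ∀ v, A.mulVec v = v) :
    A = 1 := by
  refine Matrix.ext fun i j => ?_
  have := congrFun (h (Pi.single j 1)) i
  simp [Matrix.mulVec_single, Pi.single_apply] at this
  rw [this]
  simp [Matrix.one_apply, Pi.single_apply, eq_comm]

private lemma eig (m00 m01 m10 m11 s : ℂ)
    (hs : s ^ 2 = (m00 + m11) ^ 2 - 4 * (m00 * m11 - m01 * m10)) :
    (m00 - (m00 + m11 + s) / 2) * (m11 - (m00 + m11 + s) / 2) - m01 * m10 = 0 := by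
  linear_combination (1/4) * hs

end Helpers

/-- A pair `(Γ₁, Γ₂)` of `N × N` complex matrices represents a true `2 × N × N`
entangled state. -/
def TrueEntangled {N : ℕ} (Γ₁ Γ₂ : Matrix (Fin N) (Fin N) ℂ) : Prop :=
  LinearIndependent ℂ ![Γ₁, Γ₂] ∧
  (Matrix.fromRows Γ₁ Γ₂).rank = N ∧
  (Matrix.fromCols Γ₁ Γ₂).rank = N

/-- SLOCC equivalence of two pairs of `N × N` complex matrices. -/
def SLOCCEquiv {N : ℕ} (Γ₁ Γ₂ Γ₁' Γ₂' : Matrix (Fin N) (Fin N) ℂ) : Prop :=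
  ∃ (T : Matrix (Fin 2) (Fin 2) ℂ) (P Q : Matrix (Fin N) (Fin N) ℂ),
    IsUnit T ∧ IsUnit P ∧ IsUnit Q ∧
    Γ₁' = P * (T 0 0 • Γ₁ + T 0 1 • Γ₂) * Q ∧
    Γ₂' = P * (T 1 0 • Γ₁ + T 1 1 • Γ₂) * Q

private lemma slocc_trans {N : ℕ} {A B C D E F : Matrix (Fin N) (Fin N) ℂ}
    (h1 : SLOCCEquiv A B C D) (h2 : SLOCCEquiv C D E F) : SLOCCEquiv A B E F := by
  obtain ⟨T, P, Q, hT, hP, hQ, hC, hD⟩ := h1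
  obtain ⟨T', P', Q', hT', hP', hQ', hE, hF⟩ := h2
  refine ⟨T' * T, P' * P, Q * Q', hT'.mul hT, hP'.mul hP, hQ.mul hQ', ?_, ?_⟩ <;>
  · subst hC hD hE hF
    simp only [Matrix.mul_apply, Fin.sum_univ_two, Matrix.mul_add, Matrix.add_mul,
      mul_smul_comm, smul_mul_assoc, smul_smul, add_smul, smul_add, Matrix.mul_assoc]
    abel

theorem ghz_or_w_classification (Γ₁ Γ₂ : Matrix (Fin 2) (Fin 2) ℂ)
    (h : TrueEntangled Γ₁ Γ₂) :
    SLOCCEquiv Γ₁ Γ₂ (1 : Matrix (Fin 2) (Fin 2) ℂ) !![(1 : ℂ), 0; 0, 0] ∨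
    SLOCCEquiv Γ₁ Γ₂ (1 : Matrix (Fin 2) (Fin 2) ℂ) !![(0 : ℂ), 1; 0, 0] := by
  obtain ⟨hli, hrow, hcol⟩ := h
  have hΓ1 : Γ₁ ≠ 0 := by have := hli.ne_zero 0; simpa using this
  by_cases hex : ∃ a b : ℂ, (a • Γ₁ + b • Γ₂).det ≠ 0
  case neg =>
    -- the degenerate case is impossible
    push_neg at hex
    exfalso
    have d1 : Γ₁.det = 0 := by simpa using hex 1 0
    have d2 : Γ₂.det = 0 := by simpa using hex 0 1
    have d12 : (Γ₁ + Γ₂).det = 0 := by simpa using hex 1 1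
    obtain ⟨u₁, v₁, hG1⟩ := rank_one_decomp Γ₁ d1
    obtain ⟨u₂, v₂, hG2⟩ := rank_one_decomp Γ₂ d2
    have hu1 : u₁ ≠ 0 := by
      intro h0
      exact hΓ1 (Matrix.ext fun i j => by rw [hG1 i j, congrFun h0 i]; simp)
    have hv1 : v₁ ≠ 0 := by
      intro h0
      exact hΓ1 (Matrix.ext fun i j => by rw [hG1 i j, congrFun h0 j]; simp)
    have key : (u₁ 0 * u₂ 1 - u₁ 1 * u₂ 0) * (v₁ 0 * v₂ 1 - v₁ 1 * v₂ 0) = 0 := by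
      rw [det_fin_two] at d12
      simp only [Matrix.add_apply, hG1, hG2] at d12
      linear_combination d12
    rcases mul_eq_zero.mp key with hkey | hkey
    · -- columns of `fromColumns` all lie on the line spanned by u₁
      obtain ⟨l, hl⟩ := colinear u₁ u₂ hu1 (by linear_combination hkey)
      have hle := rank_le_one_outer (fromCols Γ₁ Γ₂) u₁
          (Sum.elim v₁ (fun j => l * v₂ j)) ?_
      · omega
      · rintro i (j | j)
        · simp [fromCols_apply_inl, hG1]
        · simp only [fromCols_apply_inr, hG2, congrFun hl i, Sum.elim_inr,
            Pi.smul_apply, smul_eq_mul]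
          ring
    · -- rows of `fromRows` all lie on the line spanned by v₁
      obtain ⟨l, hl⟩ := colinear v₁ v₂ hv1 (by linear_combination hkey)
      have hle := rank_le_one_outer (fromRows Γ₁ Γ₂)
          (Sum.elim u₁ (fun i => l * u₂ i)) v₁ ?_
      · omega
      · rintro (i | i) j
        · simp [fromRows_apply_inl, hG1]
        · simp only [fromRows_apply_inr, hG2, congrFun hl j, Sum.elim_inr,
            Pi.smul_apply, smul_eq_mul]
          ring
  case pos =>
  obtain ⟨a, b, hab⟩ := hex
  set G := a • Γ₁ + b • Γ₂ with hGdef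
  have hGdet : IsUnit G.det := isUnit_iff_ne_zero.mpr hab
  have hGinv : IsUnit G⁻¹ := (Matrix.isUnit_iff_isUnit_det _).mpr (Matrix.isUnit_det_of_right_inverse (Matrix.nonsing_inv_mul G hGdet))
  obtain ⟨e, f, hTdet⟩ : ∃ e f : ℂ, a * f - b * e ≠ 0 := by
    by_cases ha : a = 0
    · have hb : b ≠ 0 := by
        intro hb
        apply hab
        simp [hGdef, ha, hb]
      exact ⟨1, 0, by simpa [ha] using hb⟩
    · exact ⟨0, 1, by simpa using ha⟩
  have hT1 : IsUnit (!![a, b; e, f] : Matrix (Fin 2) (Fin 2) ℂ) := by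
    rw [Matrix.isUnit_iff_isUnit_det, det_fin_two_of]
    exact isUnit_iff_ne_zero.mpr hTdet
  set M := G⁻¹ * (e • Γ₁ + f • Γ₂) with hMdef
  have eq1 : SLOCCEquiv Γ₁ Γ₂ 1 M := by
    refine ⟨!![a, b; e, f], G⁻¹, 1, hT1, hGinv, isUnit_one, ?_, ?_⟩
    · simp [Matrix.nonsing_inv_mul G hGdet]
      exact (Matrix.nonsing_inv_mul G hGdet).symm
    · simp [hMdef]
  -- M is not a scalar matrix
  have hMns : ∀ μ : ℂ, M ≠ μ • 1 := by
    intro μ hμ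
    have hG : e • Γ₁ + f • Γ₂ = μ • G := by
      have h2 := congrArg (fun X => G * X) hμ
      simp only [hMdef, ← Matrix.mul_assoc, Matrix.mul_nonsing_inv G hGdet,
        Matrix.one_mul, mul_smul_comm, Matrix.mul_one] at h2
      exact h2
    have hz : (e - μ * a) • Γ₁ + (f - μ * b) • Γ₂ = 0 := by
      have h3 : e • Γ₁ + f • Γ₂ - μ • (a • Γ₁ + b • Γ₂) = 0 := by
        rw [hGdef] at hG
        exact sub_eq_zero.mpr hG
      have h4 : (e - μ * a) • Γ₁ + (f - μ * b) • Γ₂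
          = e • Γ₁ + f • Γ₂ - μ • (a • Γ₁ + b • Γ₂) := by module
      rw [h4, h3]
    obtain ⟨h1, h2⟩ := LinearIndependent.pair_iff.mp hli _ _ hz
    exact hTdet (by linear_combination a * h2 - b * h1)
  -- find an eigenvalue of M
  obtain ⟨s, hs⟩ := IsAlgClosed.exists_pow_nat_eq
    ((M 0 0 + M 1 1) ^ 2 - 4 * (M 0 0 * M 1 1 - M 0 1 * M 1 0)) (n := 2) (by norm_num)
  set α : ℂ := (M 0 0 + M 1 1 + s) / 2 with hαdef
  set K : Matrix (Fin 2) (Fin 2) ℂ := M - α • 1 with hKdef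
  have hK00 : K 0 0 = M 0 0 - α := by simp [hKdef, Matrix.sub_apply, Matrix.one_apply]
  have hK01 : K 0 1 = M 0 1 := by simp [hKdef, Matrix.sub_apply, Matrix.one_apply]
  have hK10 : K 1 0 = M 1 0 := by simp [hKdef, Matrix.sub_apply, Matrix.one_apply]
  have hK11 : K 1 1 = M 1 1 - α := by simp [hKdef, Matrix.sub_apply, Matrix.one_apply]
  have hdetK : K.det = 0 := by
    rw [det_fin_two, hK00, hK01, hK10, hK11, hαdef]
    exact eig _ _ _ _ s hs
  have hK0 : K ≠ 0 := by
    intro h0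
    exact hMns α (by rw [← sub_eq_zero]; exact h0)
  by_cases hK2 : K * K = 0
  · -- W case
    right
    obtain ⟨v, hv⟩ := exists_mulVec_ne K hK0
    set u : Fin 2 → ℂ := K.mulVec v with hudef
    have hKu : K.mulVec u = 0 := by
      rw [hudef, Matrix.mulVec_mulVec, hK2, Matrix.zero_mulVec]
    set S : Matrix (Fin 2) (Fin 2) ℂ := !![u 0, v 0; u 1, v 1] with hSdef
    have hdS : IsUnit S.det := by
      rw [isUnit_iff_ne_zero]
      intro h0
      rw [hSdef, det_fin_two_of] at h0
      obtain ⟨l, hl⟩ := colinear u v hv (by linear_combination h0)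
      exact hv (by rw [hudef, hl, Matrix.mulVec_smul, hKu, smul_zero])
    have hSu : IsUnit S := (Matrix.isUnit_iff_isUnit_det S).mpr hdS
    have hSinv : IsUnit S⁻¹ :=
      (Matrix.isUnit_iff_isUnit_det _).mpr (Matrix.isUnit_det_of_right_inverse (Matrix.nonsing_inv_mul S hdS))
    have hKS : K * S = S * !![(0:ℂ), 1; 0, 0] := by
      have hu0 : u 0 = K 0 0 * v 0 + K 0 1 * v 1 := by
        rw [hudef]; simp [Matrix.mulVec, dotProduct, Fin.sum_univ_two]
      have hu1 : u 1 = K 1 0 * v 0 + K 1 1 * v 1 := by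
        rw [hudef]; simp [Matrix.mulVec, dotProduct, Fin.sum_univ_two]
      have hKu0 : K 0 0 * u 0 + K 0 1 * u 1 = 0 := by
        have := congrFun hKu 0
        simpa [Matrix.mulVec, dotProduct, Fin.sum_univ_two] using this
      have hKu1 : K 1 0 * u 0 + K 1 1 * u 1 = 0 := by
        have := congrFun hKu 1
        simpa [Matrix.mulVec, dotProduct, Fin.sum_univ_two] using this
      ext i j
      fin_cases i <;> fin_cases j <;>
        simp [hSdef, Matrix.mul_apply, Fin.sum_univ_two] <;>
        first
          | ring1
          | linear_combination hKu0
          | linear_combination hKu1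
          | linear_combination hu0
          | linear_combination hu1
          | linear_combination -hKu0
          | linear_combination -hKu1
          | linear_combination -hu0
          | linear_combination -hu1
    have hcomb : (-α) • (1 : Matrix (Fin 2) (Fin 2) ℂ) + (1 : ℂ) • M = K := by
      rw [hKdef]; module
    have eq2 : SLOCCEquiv 1 M 1 !![(0:ℂ), 1; 0, 0] := by
      refine ⟨!![1, 0; -α, 1], S⁻¹, S, ?_, hSinv, hSu, ?_, ?_⟩
      · rw [Matrix.isUnit_iff_isUnit_det, det_fin_two_of]
        simp
      · simp [Matrix.nonsing_inv_mul S hdS]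
      · have e00 : (!![1, 0; -α, 1] : Matrix (Fin 2) (Fin 2) ℂ) 1 0 = -α := by simp
        have e01 : (!![1, 0; -α, 1] : Matrix (Fin 2) (Fin 2) ℂ) 1 1 = 1 := by simp
        rw [e00, e01, hcomb, Matrix.mul_assoc, hKS, ← Matrix.mul_assoc,
          Matrix.nonsing_inv_mul S hdS, Matrix.one_mul]
    exact slocc_trans eq1 eq2
  · -- GHZ case
    left
    set c : ℂ := K 0 0 + K 1 1 with hcdef
    have hCH : K * K = c • K := sq_eq_trace_smul K hdetK
    have hc : c ≠ 0 := by
      intro h0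
      rw [h0, zero_smul] at hCH
      exact hK2 hCH
    set E : Matrix (Fin 2) (Fin 2) ℂ := c⁻¹ • K with hEdef
    have hEE : E * E = E := by
      rw [hEdef, Matrix.smul_mul, Matrix.mul_smul, hCH, smul_smul, smul_smul,
        mul_assoc, inv_mul_cancel₀ hc, mul_one]
    have hE0 : E ≠ 0 := by
      rw [hEdef]
      exact smul_ne_zero (inv_ne_zero hc) hK0
    have hE1 : E ≠ 1 := by
      intro h0
      have : E.det = 0 := by
        rw [hEdef, Matrix.det_smul, hdetK, mul_zero]
      rw [h0, Matrix.det_one] at this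
      exact one_ne_zero this
    obtain ⟨v, hv⟩ := exists_mulVec_ne E hE0
    set u : Fin 2 → ℂ := E.mulVec v with hudef
    have hEu : E.mulVec u = u := by
      rw [hudef, Matrix.mulVec_mulVec, hEE]
    obtain ⟨w, hw⟩ : ∃ w, E.mulVec w ≠ w := by
      by_contra hww
      push_neg at hww
      exact hE1 (eq_one_of_mulVec E hww)
    set z : Fin 2 → ℂ := w - E.mulVec w with hzdef
    have hz0 : z ≠ 0 := by
      rw [hzdef]
      exact sub_ne_zero.mpr (Ne.symm hw)
    have hEz : E.mulVec z = 0 := by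
      rw [hzdef, Matrix.mulVec_sub, Matrix.mulVec_mulVec, hEE, sub_self]
    set S : Matrix (Fin 2) (Fin 2) ℂ := !![u 0, z 0; u 1, z 1] with hSdef
    have hdS : IsUnit S.det := by
      rw [isUnit_iff_ne_zero]
      intro h0
      rw [hSdef, det_fin_two_of] at h0
      obtain ⟨l, hl⟩ := colinear u z hv (by linear_combination h0)
      have h5 : E.mulVec z = l • u := by rw [hl, Matrix.mulVec_smul, hEu]
      have h6 : l • u = 0 := by rw [← h5, hEz]
      rcases smul_eq_zero.mp h6 with h7 | h7
      · exact hz0 (by rw [hl, h7, zero_smul])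
      · exact hv h7
    have hSu : IsUnit S := (Matrix.isUnit_iff_isUnit_det S).mpr hdS
    have hSinv : IsUnit S⁻¹ :=
      (Matrix.isUnit_iff_isUnit_det _).mpr (Matrix.isUnit_det_of_right_inverse (Matrix.nonsing_inv_mul S hdS))
    have hES : E * S = S * !![(1:ℂ), 0; 0, 0] := by
      have hEu0 : E 0 0 * u 0 + E 0 1 * u 1 = u 0 := by
        have := congrFun hEu 0
        simpa [Matrix.mulVec, dotProduct, Fin.sum_univ_two] using this
      have hEu1 : E 1 0 * u 0 + E 1 1 * u 1 = u 1 := by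
        have := congrFun hEu 1
        simpa [Matrix.mulVec, dotProduct, Fin.sum_univ_two] using this
      have hEz0 : E 0 0 * z 0 + E 0 1 * z 1 = 0 := by
        have := congrFun hEz 0
        simpa [Matrix.mulVec, dotProduct, Fin.sum_univ_two] using this
      have hEz1 : E 1 0 * z 0 + E 1 1 * z 1 = 0 := by
        have := congrFun hEz 1
        simpa [Matrix.mulVec, dotProduct, Fin.sum_univ_two] using this
      ext i j
      fin_cases i <;> fin_cases j <;>
        simp [hSdef, Matrix.mul_apply, Fin.sum_univ_two] <;>
        first
          | ring1
          | linear_combination hEu0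
          | linear_combination hEu1
          | linear_combination hEz0
          | linear_combination hEz1
          | linear_combination -hEu0
          | linear_combination -hEu1
          | linear_combination -hEz0
          | linear_combination -hEz1
    have hcomb : (-(α / c)) • (1 : Matrix (Fin 2) (Fin 2) ℂ) + c⁻¹ • M = E := by
      rw [hEdef, hKdef]
      have : α / c = c⁻¹ * α := by rw [div_eq_inv_mul]
      rw [this]
      module
    have eq2 : SLOCCEquiv 1 M 1 !![(1:ℂ), 0; 0, 0] := by
      refine ⟨!![1, 0; -(α / c), c⁻¹], S⁻¹, S, ?_, hSinv, hSu, ?_, ?_⟩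
      · rw [Matrix.isUnit_iff_isUnit_det, det_fin_two_of]
        simpa using inv_ne_zero hc
      · simp [Matrix.nonsing_inv_mul S hdS]
      · have e00 : (!![1, 0; -(α / c), c⁻¹] : Matrix (Fin 2) (Fin 2) ℂ) 1 0 = -(α / c) := by
          simp
        have e01 : (!![1, 0; -(α / c), c⁻¹] : Matrix (Fin 2) (Fin 2) ℂ) 1 1 = c⁻¹ := by
          simp
        rw [e00, e01, hcomb, Matrix.mul_assoc, hES, ← Matrix.mul_assoc,
          Matrix.nonsing_inv_mul S hdS, Matrix.one_mul]
    exact slocc_trans eq1 eq2
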